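/- The string equations hold: for all n, (V'(Q))_{nn} = 0 and (V'(Q))_{n,n-1} = n/γ_n, where Q is the Jacobi matrix of the orthonormal quasi-polynomials. -/

import Mathlib

open Polynomial

/-- Entry of the `K`-th power of a banded (tridiagonal) semi-infinite matrix. -/
noncomputable def matPow (Q : ℕ → ℕ → ℂ) : ℕ → ℕ → ℕ → ℂ
  | 0 => fun n m => if n = m then 1 else 0
  | K + 1 => fun n m => ∑ k ∈ Finset.range (n + K + 2), matPow Q K n k * Q k m

/-- Entry of `W(Q)` for a polynomial `W` and a banded semi-infinite matrix `Q`. -/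
noncomputable def polyMat (W : Polynomial ℂ) (Q : ℕ → ℕ → ℂ) (n m : ℕ) : ℂ :=
  ∑ K ∈ Finset.range (W.natDegree + 1), W.coeff K * matPow Q K n m

noncomputable def Bpair (I : (ℂ → ℂ) →ₗ[ℂ] ℂ) (V : Polynomial ℂ) (ψ : ℕ → ℂ → ℂ)
    (q : Polynomial ℂ) (m : ℕ) : ℂ :=
  I (fun x => eval x q * Complex.exp (-(eval x V) / 2) * ψ m x)

variable (I : (ℂ → ℂ) →ₗ[ℂ] ℂ) (V : Polynomial ℂ) (ψ : ℕ → ℂ → ℂ)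

lemma Bpair_add (q r : Polynomial ℂ) (m : ℕ) :
    Bpair I V ψ (q + r) m = Bpair I V ψ q m + Bpair I V ψ r m := by
  unfold Bpair
  have h : (fun x => eval x (q + r) * Complex.exp (-(eval x V) / 2) * ψ m x)
      = (fun x => eval x q * Complex.exp (-(eval x V) / 2) * ψ m x)
        + (fun x => eval x r * Complex.exp (-(eval x V) / 2) * ψ m x) := by
    funext x; simp [eval_add]; ring
  rw [h, map_add]

lemma Bpair_smul (c : ℂ) (q : Polynomial ℂ) (m : ℕ) :
    Bpair I V ψ (c • q) m = c * Bpair I V ψ q m := by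
  unfold Bpair
  have h : (fun x => eval x (c • q) * Complex.exp (-(eval x V) / 2) * ψ m x)
      = c • (fun x => eval x q * Complex.exp (-(eval x V) / 2) * ψ m x) := by
    funext x; simp [smul_eq_mul]; ring
  rw [h, map_smul, smul_eq_mul]

lemma Bpair_zero (m : ℕ) : Bpair I V ψ 0 m = 0 := by
  unfold Bpair
  have h : (fun x => eval x (0 : Polynomial ℂ) * Complex.exp (-(eval x V) / 2) * ψ m x)
      = (0 : ℂ → ℂ) := by funext x; simp
  rw [h, map_zero]

lemma Bpair_sub (q r : Polynomial ℂ) (m : ℕ) :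
    Bpair I V ψ (q - r) m = Bpair I V ψ q m - Bpair I V ψ r m := by
  have h := Bpair_add I V ψ (q - r) r m
  rw [sub_add_cancel] at h
  linear_combination -h

lemma Bpair_sum (t : Finset ℕ) (f : ℕ → Polynomial ℂ) (m : ℕ) :
    Bpair I V ψ (∑ k ∈ t, f k) m = ∑ k ∈ t, Bpair I V ψ (f k) m := by
  classical
  induction t using Finset.induction with
  | empty => simpa using Bpair_zero I V ψ m
  | insert _ _ hx ih =>
    rw [Finset.sum_insert hx, Finset.sum_insert hx, Bpair_add, ih]

section Main
variable (p : ℕ → Polynomial ℂ) (s : ℕ → ℂ)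
variable (hp : ∀ n, (p n).Monic ∧ (p n).natDegree = n)
variable (hs : ∀ n, s n ≠ 0)
variable (hψ : ∀ n x, ψ n x = eval x (p n) * Complex.exp (-(eval x V) / 2) / s n)
variable (horth : ∀ n m, I (fun x => ψ n x * ψ m x) = if n = m then 1 else 0)

include hs hψ horth in
lemma Bpair_diag (n m : ℕ) :
    Bpair I V ψ (p n) m = s n * (if n = m then 1 else 0) := by
  unfold Bpair
  have h : (fun x => eval x (p n) * Complex.exp (-(eval x V) / 2) * ψ m x)
      = s n • (fun x => ψ n x * ψ m x) := by
    funext x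
    simp only [Pi.smul_apply, smul_eq_mul, hψ n x]
    field_simp
    rw [mul_div_assoc, div_self (hs n), mul_one]
  rw [h, map_smul, horth, smul_eq_mul]

include hp in
lemma exist_expand : ∀ N : ℕ, ∀ q : Polynomial ℂ, q.natDegree ≤ N →
    ∃ c : ℕ → ℂ, q = ∑ k ∈ Finset.range (N + 1), c k • p k := by
  intro N
  induction N with
  | zero =>
    intro q hq
    refine ⟨fun _ => q.coeff 0, ?_⟩
    have h0 : p 0 = 1 := by
      have := (hp 0).1
      have h2 := (hp 0).2
      exact Polynomial.Monic.natDegree_eq_zero this |>.mp h2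
    rw [Polynomial.eq_C_of_natDegree_le_zero hq]
    simp [h0, Polynomial.smul_eq_C_mul]
  | succ N ih =>
    intro q hq
    set c := q.coeff (N + 1) with hc
    have hr : (q - c • p (N + 1)).natDegree ≤ N := by
      rw [Polynomial.natDegree_le_iff_coeff_eq_zero]
      intro m hm
      rw [Polynomial.coeff_sub, Polynomial.coeff_smul, smul_eq_mul]
      rcases eq_or_lt_of_le (Nat.succ_le_of_lt hm) with h | h
      · have hlead : (p (N + 1)).coeff (N + 1) = 1 := by
          have := (hp (N + 1)).1
          have h2 := (hp (N + 1)).2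
          simpa [Polynomial.Monic, Polynomial.leadingCoeff, h2] using this
        subst h
        simp [hlead, hc]
      · have h1 : q.coeff m = 0 :=
          Polynomial.coeff_eq_zero_of_natDegree_lt (lt_of_le_of_lt hq h)
        have h2 : (p (N + 1)).coeff m = 0 :=
          Polynomial.coeff_eq_zero_of_natDegree_lt (by rw [(hp (N + 1)).2]; exact h)
        simp [h1, h2]
    obtain ⟨cc, hcc⟩ := ih _ hr
    refine ⟨fun k => if k = N + 1 then c else cc k, ?_⟩
    have : ∑ k ∈ Finset.range (N + 1), (if k = N + 1 then c else cc k) • p k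
        = ∑ k ∈ Finset.range (N + 1), cc k • p k := by
      apply Finset.sum_congr rfl
      intro k hk
      rw [if_neg (by have := Finset.mem_range.mp hk; omega)]
    rw [Finset.sum_range_succ, this, ← hcc]
    simp

include hs hψ horth in
lemma ident_expand (N : ℕ) (c : ℕ → ℂ) (q : Polynomial ℂ)
    (hq : q = ∑ k ∈ Finset.range (N + 1), c k • p k) (m : ℕ) :
    Bpair I V ψ q m = if m < N + 1 then c m * s m else 0 := by
  rw [hq, Bpair_sum]
  have : ∀ k ∈ Finset.range (N + 1),
      Bpair I V ψ (c k • p k) m = if k = m then c k * s k else 0 := by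
    intro k _
    rw [Bpair_smul, Bpair_diag I V ψ p s hs hψ horth]
    by_cases h : k = m <;> simp [h, mul_comm]
  rw [Finset.sum_congr rfl this, Finset.sum_ite_eq' (Finset.range (N + 1)) m
    (fun k => c k * s k)]
  simp [Finset.mem_range]

include hp hs hψ horth in
lemma expand_B (N : ℕ) (q : Polynomial ℂ) (hq : q.natDegree ≤ N) :
    q = ∑ k ∈ Finset.range (N + 1), (Bpair I V ψ q k / s k) • p k := by
  obtain ⟨c, hc⟩ := exist_expand p hp N q hq
  conv_lhs => rw [hc]
  apply Finset.sum_congr rfl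
  intro k hk
  have hid := ident_expand I V ψ p s hs hψ horth N c q hc k
  rw [if_pos (Finset.mem_range.mp hk)] at hid
  rw [hid, mul_div_assoc, div_self (hs k), mul_one]

include hp hs hψ horth in
lemma B_high (N : ℕ) (q : Polynomial ℂ) (hq : q.natDegree ≤ N) (m : ℕ) (hm : N < m) :
    Bpair I V ψ q m = 0 := by
  obtain ⟨c, hc⟩ := exist_expand p hp N q hq
  have hid := ident_expand I V ψ p s hs hψ horth N c q hc m
  rw [if_neg (by omega)] at hid
  exact hid

include hp hs hψ horth in
lemma B_high' (q : Polynomial ℂ) (m : ℕ) (hm : q.degree < (m : ℕ)) :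
    Bpair I V ψ q m = 0 := by
  by_cases h0 : q = 0
  · rw [h0]; exact Bpair_zero I V ψ m
  · exact B_high I V ψ p s hp hs hψ horth q.natDegree q le_rfl m
      ((Polynomial.natDegree_lt_iff_degree_lt h0).mpr hm)

include hs hψ in
lemma Q_B (Q : ℕ → ℕ → ℂ) (hQ : ∀ n m, Q n m = I (fun x => x * ψ n x * ψ m x))
    (k m : ℕ) : Q k m = Bpair I V ψ (X * p k) m / s k := by
  rw [hQ]
  have h : (fun x => x * ψ k x * ψ m x)
      = (s k)⁻¹ • (fun x => eval x (X * p k) * Complex.exp (-(eval x V) / 2) * ψ m x) := by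
    funext x
    simp only [Pi.smul_apply, smul_eq_mul, hψ k x, eval_mul, eval_X]
    ring
  rw [h, map_smul, smul_eq_mul]
  rw [div_eq_inv_mul]
  rfl

include hp hs hψ horth in
lemma matPow_B (Q : ℕ → ℕ → ℂ) (hQ : ∀ n m, Q n m = I (fun x => x * ψ n x * ψ m x)) :
    ∀ K n m, matPow Q K n m = Bpair I V ψ (X ^ K * p n) m / s n := by
  intro K
  induction K with
  | zero =>
    intro n m
    simp only [matPow, pow_zero, one_mul]
    rw [Bpair_diag I V ψ p s hs hψ horth]
    by_cases h : n = m
    · simp [h, div_self (hs m)]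
    · simp [h]
  | succ K ih =>
    intro n m
    have hdeg : (X ^ K * p n).natDegree ≤ n + K + 1 := by
      calc (X ^ K * p n).natDegree ≤ (X ^ K : Polynomial ℂ).natDegree + (p n).natDegree :=
            Polynomial.natDegree_mul_le
        _ = K + n := by rw [Polynomial.natDegree_X_pow, (hp n).2]
        _ ≤ n + K + 1 := by omega
    have hexp := expand_B I V ψ p s hp hs hψ horth (n + K + 1) (X ^ K * p n) hdeg
    have hXq : X ^ (K + 1) * p n = ∑ k ∈ Finset.range (n + K + 2),
        (Bpair I V ψ (X ^ K * p n) k / s k) • (X * p k) := by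
      rw [pow_succ, mul_comm (X ^ K : Polynomial ℂ) X, mul_assoc]
      conv_lhs => rw [hexp]
      rw [Finset.mul_sum]
      exact Finset.sum_congr rfl fun k _ => mul_smul_comm _ _ _
    have hR : Bpair I V ψ (X ^ (K + 1) * p n) m = ∑ k ∈ Finset.range (n + K + 2),
        (Bpair I V ψ (X ^ K * p n) k / s k) * Bpair I V ψ (X * p k) m := by
      rw [hXq, Bpair_sum]
      exact Finset.sum_congr rfl fun k _ => Bpair_smul I V ψ _ _ m
    simp only [matPow]
    rw [hR, Finset.sum_div]
    apply Finset.sum_congr rfl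
    intro k _
    rw [ih n k, Q_B I V ψ p s hs hψ Q hQ k m]
    ring

include hp hs hψ horth in
lemma polyMat_B (Q : ℕ → ℕ → ℂ) (hQ : ∀ n m, Q n m = I (fun x => x * ψ n x * ψ m x))
    (n m : ℕ) :
    polyMat (derivative V) Q n m = Bpair I V ψ (derivative V * p n) m / s n := by
  have h2 : derivative V * p n = ∑ K ∈ Finset.range ((derivative V).natDegree + 1),
      ((derivative V).coeff K) • (X ^ K * p n) := by
    conv_lhs => rw [Polynomial.as_sum_range' (derivative V) _ (Nat.lt_succ_self _)]
    rw [Finset.sum_mul]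
    refine Finset.sum_congr rfl fun K _ => ?_
    rw [← Polynomial.C_mul_X_pow_eq_monomial, mul_assoc, ← Polynomial.smul_eq_C_mul]
  rw [h2, Bpair_sum, Finset.sum_div]
  unfold polyMat
  refine Finset.sum_congr rfl fun K _ => ?_
  rw [matPow_B I V ψ p s hp hs hψ horth Q hQ K n m, Bpair_smul, mul_div_assoc]

include hψ in
lemma polyB_sym (n m : ℕ) :
    Bpair I V ψ (derivative V * p n) m / s n = Bpair I V ψ (derivative V * p m) n / s m := by
  have key : ∀ a b : ℕ, Bpair I V ψ (derivative V * p a) b / s a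
      = I (fun x => eval x (derivative V) * ψ a x * ψ b x) := by
    intro a b
    have h : (fun x => eval x (derivative V) * ψ a x * ψ b x)
        = (s a)⁻¹ • (fun x => eval x (derivative V * p a) *
            Complex.exp (-(eval x V) / 2) * ψ b x) := by
      funext x
      simp only [Pi.smul_apply, smul_eq_mul, hψ a x, eval_mul]
      ring
    rw [h, map_smul, smul_eq_mul, div_eq_inv_mul]
    rfl
  rw [key, key]
  congr 1
  funext x
  ring

include hψ in
lemma deriv_psi (n : ℕ) (x : ℂ) :
    deriv (ψ n) x = eval x (derivative (p n) - Polynomial.C (2⁻¹ : ℂ) *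
      (derivative V * p n)) * Complex.exp (-(eval x V) / 2) / s n := by
  have hfun : ψ n = fun x => eval x (p n) * Complex.exp (-(eval x V) / 2) / s n :=
    funext (hψ n)
  have h1 : HasDerivAt (fun y => eval y (p n)) (eval x (derivative (p n))) x :=
    Polynomial.hasDerivAt _ x
  have h2 : HasDerivAt (fun y => -(eval y V) / 2) (-(eval x (derivative V)) / 2) x :=
    ((V.hasDerivAt x).neg).div_const 2
  have h3 := h2.cexp
  have h4 := h1.mul h3
  have h5 := h4.div_const (s n)
  rw [hfun, show (fun x => eval x (p n) * Complex.exp (-(eval x V) / 2) / s n) = (fun x => ((fun y => eval y (p n)) * fun x => Complex.exp (-(eval x V) / 2)) x / s n) from rfl, h5.deriv]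
  simp only [eval_sub, eval_mul, eval_C]
  ring

include hψ in
lemma P_B (P : ℕ → ℕ → ℂ) (hP : ∀ n m, P n m = I (fun x => deriv (ψ n) x * ψ m x))
    (n m : ℕ) :
    P n m = (Bpair I V ψ (derivative (p n)) m
      - 2⁻¹ * Bpair I V ψ (derivative V * p n) m) / s n := by
  rw [hP]
  have h : (fun x => deriv (ψ n) x * ψ m x)
      = (s n)⁻¹ • (fun x => eval x (derivative (p n) - Polynomial.C (2⁻¹ : ℂ) *
          (derivative V * p n)) * Complex.exp (-(eval x V) / 2) * ψ m x) := by
    funext x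
    simp only [Pi.smul_apply, smul_eq_mul, deriv_psi V ψ p s hψ n x]
    ring
  rw [h, map_smul, smul_eq_mul, ← div_eq_inv_mul]
  congr 1
  show Bpair I V ψ (derivative (p n) - Polynomial.C (2⁻¹ : ℂ) * (derivative V * p n)) m = _
  rw [Bpair_sub, ← Polynomial.smul_eq_C_mul, Bpair_smul]

end Main

theorem stmt8 (d : ℕ) (V : Polynomial ℂ) (hV : V.natDegree = d + 1)
    (I : (ℂ → ℂ) →ₗ[ℂ] ℂ)
    (p : ℕ → Polynomial ℂ) (hp : ∀ n, (p n).Monic ∧ (p n).natDegree = n)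
    (s : ℕ → ℂ) (hs : ∀ n, s n ≠ 0)
    (ψ : ℕ → ℂ → ℂ)
    (hψ : ∀ n x, ψ n x = eval x (p n) * Complex.exp (-(eval x V) / 2) / s n)
    (horth : ∀ n m, I (fun x => ψ n x * ψ m x) = if n = m then 1 else 0)
    (Q : ℕ → ℕ → ℂ) (hQ : ∀ n m, Q n m = I (fun x => x * ψ n x * ψ m x))
    (P : ℕ → ℕ → ℂ) (hP : ∀ n m, P n m = I (fun x => deriv (ψ n) x * ψ m x))
    (hanti : ∀ n m, P n m + P m n = 0) :
    (∀ n : ℕ, polyMat (derivative V) Q n n = 0) ∧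
      ∀ n : ℕ, 1 ≤ n →
        polyMat (derivative V) Q n (n - 1) = (n : ℂ) / Q n (n - 1) := by
  have hlead : ∀ k : ℕ, (p k).coeff k = 1 := by
    intro k
    have h1 := (hp k).1
    have h2 := (hp k).2
    simpa [Polynomial.Monic, Polynomial.leadingCoeff, h2] using h1
  constructor
  · -- diagonal
    intro n
    have hPB := P_B I V ψ p s hψ P hP n n
    have hd0 : Bpair I V ψ (derivative (p n)) n = 0 := by
      cases n with
      | zero =>
        have h1 : p 0 = 1 :=
          (Polynomial.Monic.natDegree_eq_zero (hp 0).1).mp (hp 0).2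
        rw [h1, Polynomial.derivative_one]
        exact Bpair_zero I V ψ 0
      | succ k =>
        refine B_high I V ψ p s hp hs hψ horth k _ ?_ (k + 1) (Nat.lt_succ_self k)
        have := Polynomial.natDegree_derivative_le (p (k + 1))
        rw [(hp (k + 1)).2] at this
        simpa using this
    have hPnn : P n n = 0 := by
      have h := hanti n n
      have h2 : (2 : ℂ) * P n n = 0 := by linear_combination h
      rcases mul_eq_zero.mp h2 with h3 | h3
      · exact absurd h3 two_ne_zero
      · exact h3
    rw [hPnn, hd0] at hPB
    have hB2 : Bpair I V ψ (derivative V * p n) n = 0 := by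
      field_simp [hs n] at hPB
      linear_combination hPB
    rw [polyMat_B I V ψ p s hp hs hψ horth Q hQ n n, hB2, zero_div]
  · -- off-diagonal
    intro n hn
    obtain ⟨n', rfl⟩ : ∃ n', n = n' + 1 := ⟨n - 1, by omega⟩
    have hdpn : Bpair I V ψ (derivative (p (n' + 1))) n' = ((n' : ℂ) + 1) * s n' := by
      set r := derivative (p (n' + 1)) - ((n' : ℂ) + 1) • p n' with hr
      have hrd : r.degree < (n' : WithBot ℕ) := by
        rw [Polynomial.degree_lt_iff_coeff_zero]
        intro m hm
        have hm' : n' ≤ m := by exact_mod_cast hm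
        rw [hr, Polynomial.coeff_sub, Polynomial.coeff_smul, smul_eq_mul,
          Polynomial.coeff_derivative]
        rcases eq_or_lt_of_le hm' with h | h
        · rw [← h]
          rw [hlead n', hlead (n' + 1)]
          push_cast
          ring
        · have c1 : (p (n' + 1)).coeff (m + 1) = 0 :=
            Polynomial.coeff_eq_zero_of_natDegree_lt (by rw [(hp (n' + 1)).2]; omega)
          have c2 : (p n').coeff m = 0 :=
            Polynomial.coeff_eq_zero_of_natDegree_lt (by rw [(hp n').2]; omega)
          rw [c1, c2]
          ring
      have hsplit : derivative (p (n' + 1)) = r + ((n' : ℂ) + 1) • p n' := by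
        rw [hr]; ring
      rw [hsplit, Bpair_add, Bpair_smul,
        B_high' I V ψ p s hp hs hψ horth r n' hrd,
        Bpair_diag I V ψ p s hs hψ horth]
      simp
    have hQval : Q (n' + 1) n' = s (n' + 1) / s n' := by
      have hsymQ : Q (n' + 1) n' = Q n' (n' + 1) := by
        rw [hQ, hQ]; congr 1; funext x; ring
      rw [hsymQ, Q_B I V ψ p s hs hψ Q hQ n' (n' + 1)]
      have hXd : (X * p n' - p (n' + 1)).degree < ((n' + 1 : ℕ) : WithBot ℕ) := by
        rw [Polynomial.degree_lt_iff_coeff_zero]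
        intro m hm
        have hm' : n' + 1 ≤ m := by exact_mod_cast hm
        obtain ⟨k, rfl⟩ : ∃ k, m = k + 1 := ⟨m - 1, by omega⟩
        rw [Polynomial.coeff_sub, Polynomial.coeff_X_mul]
        rcases eq_or_lt_of_le hm' with h | h
        · have hk : n' = k := by omega
          rw [← hk]
          rw [hlead n', hlead (n' + 1), sub_self]
        · have c1 : (p n').coeff k = 0 :=
            Polynomial.coeff_eq_zero_of_natDegree_lt (by rw [(hp n').2]; omega)
          have c2 : (p (n' + 1)).coeff (k + 1) = 0 :=
            Polynomial.coeff_eq_zero_of_natDegree_lt (by rw [(hp (n' + 1)).2]; omega)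
          rw [c1, c2, sub_zero]
      have hsplit : X * p n' = (X * p n' - p (n' + 1)) + p (n' + 1) := by ring
      rw [hsplit, Bpair_add, B_high' I V ψ p s hp hs hψ horth _ (n' + 1) hXd,
        Bpair_diag I V ψ p s hs hψ horth]
      simp
    have hd2 : Bpair I V ψ (derivative (p n')) (n' + 1) = 0 := by
      refine B_high' I V ψ p s hp hs hψ horth _ (n' + 1) ?_
      calc (derivative (p n')).degree ≤ (p n').degree := Polynomial.degree_derivative_le
        _ ≤ ((p n').natDegree : WithBot ℕ) := Polynomial.degree_le_natDegree
        _ < ((n' + 1 : ℕ) : WithBot ℕ) := by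
            rw [(hp n').2]; exact_mod_cast Nat.lt_succ_self n'
    have hSym := polyB_sym I V ψ p s hψ (n' + 1) n'
    have hA := hanti (n' + 1) n'
    rw [P_B I V ψ p s hψ P hP (n' + 1) n', P_B I V ψ p s hψ P hP n' (n' + 1),
      hdpn, hd2] at hA
    simp only [Nat.add_sub_cancel]
    rw [polyMat_B I V ψ p s hp hs hψ horth Q hQ (n' + 1) n', hQval]
    set a := Bpair I V ψ (derivative V * p (n' + 1)) n' with ha
    set b := Bpair I V ψ (derivative V * p n') (n' + 1) with hb
    have hu := hs n'
    have hv := hs (n' + 1)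
    field_simp at hA hSym
    have h4 : (4 : ℂ) * s n' * (a - ((n' : ℂ) + 1) * s n') = 0 := by
      linear_combination -2 * hA + 2 * hSym
    have haN : a = ((n' : ℂ) + 1) * s n' := by
      rcases mul_eq_zero.mp h4 with h5 | h5
      · rcases mul_eq_zero.mp h5 with h6 | h6
        · exact absurd h6 (by norm_num)
        · exact absurd h6 hu
      · exact sub_eq_zero.mp h5
    rw [haN, div_div_eq_mul_div]
    push_cast
    ring
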